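/- Let G ≅ (ℤ/Nℤ)^r and H ⊆ G a subgroup with index at most N - 1. Then H cannot be generated by fewer than r elements. -/

import Mathlib

/-- Let `G ≅ (ℤ/Nℤ)^r` and `H ⊆ G` a subgroup of index at most `N - 1`.
Then `H` cannot be generated by fewer than `r` elements. -/
theorem stmt2 (N r : ℕ) (hN : 0 < N)
    (H : AddSubgroup (Fin r → ZMod N)) (hI : H.index ≤ N - 1)
    (S : Finset (Fin r → ZMod N)) (hgen : AddSubgroup.closure (S : Set (Fin r → ZMod N)) = H) :
    r ≤ S.card := by
  have : NeZero N := ⟨hN.ne'⟩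
  by_contra h
  push_neg at h
  -- `H` is contained in the `ZMod N`-span of `S`
  have hsub : (H : Set (Fin r → ZMod N)) ⊆
      (Submodule.span (ZMod N) (S : Set (Fin r → ZMod N)) : Set (Fin r → ZMod N)) := by
    rw [← hgen]
    intro x hx
    refine AddSubgroup.closure_induction ?_ ?_ ?_ ?_ hx
    · exact fun y hy => Submodule.subset_span hy
    · exact Submodule.zero_mem _
    · exact fun a b _ _ ha hb => Submodule.add_mem _ ha hb
    · exact fun a _ ha => Submodule.neg_mem _ ha
  -- the span is a quotient of `(S → ZMod N)`, so it has at most `N ^ S.card` elements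
  have hcard : Nat.card H ≤ N ^ S.card := by
    have h1 : Nat.card H ≤ Nat.card
        (Submodule.span (ZMod N) (S : Set (Fin r → ZMod N))) :=
      Nat.card_le_card_of_injective
        (Set.inclusion hsub) (Set.inclusion_injective hsub)
    refine h1.trans ?_
    have hsurj : Function.Surjective
        (fun c : (↥(S : Set (Fin r → ZMod N)) →₀ ZMod N) =>
          (⟨Finsupp.linearCombination (ZMod N) Subtype.val c, by
              rw [Finsupp.mem_span_iff_linearCombination]
              exact ⟨c, rfl⟩⟩ :
            Submodule.span (ZMod N) (S : Set (Fin r → ZMod N)))) := by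
      rintro ⟨y, hy⟩
      obtain ⟨c, hc⟩ := (Finsupp.mem_span_iff_linearCombination _ _ _).1 hy
      exact ⟨c, Subtype.ext hc⟩
    have h2 := Nat.card_le_card_of_surjective _ hsurj
    refine h2.trans ?_
    have : Nat.card (↥(S : Set (Fin r → ZMod N)) →₀ ZMod N) =
        N ^ S.card := by
      rw [Nat.card_eq_of_bijective _ (Finsupp.equivFunOnFinite).bijective]
      simp [Nat.card_eq_fintype_card, ZMod.card N]
    omega
  have htot : Nat.card H * H.index = N ^ r := by
    rw [AddSubgroup.card_mul_index]
    simp [Nat.card_eq_fintype_card, ZMod.card N]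
  have hpos : 0 < N ^ S.card := pow_pos hN _
  have key : N ^ r ≤ N ^ S.card * (N - 1) := by
    rw [← htot]
    exact Nat.mul_le_mul hcard hI
  have : N ^ S.card * (N - 1) < N ^ (S.card + 1) := by
    rw [pow_succ]
    exact Nat.mul_lt_mul_of_pos_left (by omega) hpos
  have : N ^ (S.card + 1) ≤ N ^ r := Nat.pow_le_pow_right hN h
  omega
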